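/- arXiv:math/0307375 — 14 statements merged into one kernel-verified Lean document; each statement's English description precedes it below -/
import Mathlib

section
/- The six-dimensional Euclidean Lie algebra e(3) = so(3) ⋉ ℝ³ (with so(3) acting by the standard representation) admits an integrable complex structure. Explicitly, with basis h = e₁₂ - e₂₁, f₁₃ = e₁₃ - e₃₁, f₂₃ = e₂₃ - e₃₂ of so(3) and standard basis e₁,e₂,e₃ of ℝ³, the endomorphism J defined by J h = e₃, J f₁₃ = f₂₃, J e₁ = e₂ (and J² = -id) satisfies N_J ≡ 0. -/
/-- Nijenhuis tensor of an endomorphism `J` with respect to a bracket `br`. -/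
def Nij {α : Type*} [AddCommGroup α] (br : α → α → α) (J : α → α) (x y : α) : α :=
  J (br x y) - br (J x) y - br x (J y) - J (br (J x) (J y))

/-- The Euclidean algebra `e(3) = so(3) ⋉ ℝ³`, in coordinates: an element is a pair
`(a, v)` where `a = (a₀,a₁,a₂)` are the coefficients of the basis
`h = e₁₂-e₂₁`, `f₁₃ = e₁₃-e₃₁`, `f₂₃ = e₂₃-e₃₂` of `so(3)` and `v ∈ ℝ³`. -/
abbrev E3 := (Fin 3 → ℝ) × (Fin 3 → ℝ)

/-- The bracket of `so(3)` in the basis `(h, f₁₃, f₂₃)`: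
`[h,f₁₃] = -f₂₃`, `[h,f₂₃] = f₁₃`, `[f₁₃,f₂₃] = -h`. -/
def so3br (a b : Fin 3 → ℝ) : Fin 3 → ℝ :=
  ![-(a 1 * b 2 - a 2 * b 1), a 0 * b 2 - a 2 * b 0, -(a 0 * b 1 - a 1 * b 0)]

/-- The standard action of `so(3)` on `ℝ³`:
`h e₁ = -e₂, h e₂ = e₁, f₁₃ e₁ = -e₃, f₁₃ e₃ = e₁, f₂₃ e₂ = -e₃, f₂₃ e₃ = e₂`. -/
def so3act (a v : Fin 3 → ℝ) : Fin 3 → ℝ :=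
  ![a 0 * v 1 + a 1 * v 2, -(a 0 * v 0) + a 2 * v 2, -(a 1 * v 0) - a 2 * v 1]

/-- The semidirect product bracket of `e(3)`: `[(A,u),(B,w)] = ([A,B], Aw - Bu)`. -/
def e3br (p q : E3) : E3 := (so3br p.1 q.1, so3act p.1 q.2 - so3act q.1 p.2)

/-- The endomorphism `J` of `e(3)` given by `Jh = e₃, Jf₁₃ = f₂₃, Je₁ = e₂`
(extended by `Je₃ = -h, Jf₂₃ = -f₁₃, Je₂ = -e₁`). -/
def Je3 (p : E3) : E3 := (![-(p.2 2), -(p.1 2), p.1 1], ![-(p.2 1), p.2 0, p.1 0])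

/-- `e(3)` admits an integrable complex structure: `J² = -id` and `N_J ≡ 0`. -/
theorem stmt2 :
    (∀ p : E3, Je3 (Je3 p) = -p) ∧ ∀ p q : E3, Nij e3br Je3 p q = 0 := by
  constructor
  · intro p
    simp only [Je3, Prod.ext_iff, Prod.fst_neg, Prod.snd_neg]
    constructor <;> funext i <;> fin_cases i <;> simp
  · intro p q
    simp only [Nij, e3br, Je3, so3br, so3act, Prod.mk.injEq, Prod.mk_sub_mk,
      Prod.ext_iff, Prod.fst_sub, Prod.snd_sub, Prod.fst_zero, Prod.snd_zero]
    constructor <;> funext i <;> fin_cases i <;>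
      simp [Matrix.cons_val_zero, Matrix.cons_val_one] <;> ring
end

section
/- Let (g, J) be a real Lie algebra with an integrable complex structure J admitting a J-stable vector space decomposition g = g₀ ⊕ g₁, and let ρ : g → gl(v) be a Lie algebra representation on a real vector space v equipped with I ∈ End(v) with I² = -id. If (i) ρ(x) ∘ I = I ∘ ρ(x) for all x ∈ g₀, and (ii) ρ(Jx)(Iv) = ρ(x)v for all x ∈ g₁, v ∈ v, then the endomorphism J₊(x,v) = (Jx, Iv) is an integrable complex structure on the semidirect product g ⊕_ρ v. -/
/-- Proposition: if `g = g₀ ⊕ g₁` with `g₀, g₁` `J`-stable, `ρ(x)` commutes with `I`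
for `x ∈ g₀`, and `ρ(Jx)(Iv) = ρ(x)v` for `x ∈ g₁`, then `J₊(x,v) = (Jx, Iv)` is an
integrable complex structure on the semidirect product `g ⊕_ρ v`. -/
theorem stmt4 {g v : Type*} [LieRing g] [LieAlgebra ℝ g] [AddCommGroup v] [Module ℝ v]
    (ρ : g →ₗ[ℝ] Module.End ℝ v) (hρ : ∀ x y : g, ρ ⁅x, y⁆ = ⁅ρ x, ρ y⁆)
    (J : g →ₗ[ℝ] g) (hJ2 : ∀ x, J (J x) = -x)
    (hJint : ∀ x y : g, Nij (fun a b => ⁅a, b⁆) J x y = 0)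
    (g₀ g₁ : Submodule ℝ g) (hcompl : IsCompl g₀ g₁)
    (hs0 : ∀ x ∈ g₀, J x ∈ g₀) (hs1 : ∀ x ∈ g₁, J x ∈ g₁)
    (I : Module.End ℝ v) (hI2 : ∀ w, I (I w) = -w)
    (hi : ∀ x ∈ g₀, ∀ w : v, ρ x (I w) = I (ρ x w))
    (hii : ∀ x ∈ g₁, ∀ w : v, ρ (J x) (I w) = ρ x w) :
    (∀ p : g × v, ((J (J p.1), I (I p.2)) : g × v) = -p) ∧
    ∀ p q : g × v,
      Nij (fun p q : g × v => (⁅p.1, q.1⁆, ρ p.1 q.2 - ρ q.1 p.2))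
        (fun p : g × v => (J p.1, I p.2)) p q = 0 := by
  have key : ∀ (x : g) (w : v),
      I (ρ x w) - ρ (J x) w - ρ x (I w) - I (ρ (J x) (I w)) = 0 := by
    intro x w
    have hx : x ∈ g₀ ⊔ g₁ := hcompl.sup_eq_top ▸ Submodule.mem_top
    obtain ⟨a, ha, b, hb, rfl⟩ := Submodule.mem_sup.mp hx
    have k0 : I (ρ a w) - ρ (J a) w - ρ a (I w) - I (ρ (J a) (I w)) = 0 := by
      rw [hi a ha, hi (J a) (hs0 a ha), hI2]; abel
    have k1 : I (ρ b w) - ρ (J b) w - ρ b (I w) - I (ρ (J b) (I w)) = 0 := by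
      have h1 := hii b hb w
      have h2 := hii (J b) (hs1 b hb) w
      rw [hJ2, map_neg] at h2
      have h3 : ρ b (I w) = -ρ (J b) w := by
        rw [← h2]; simp
      rw [h1, h3]; abel
    have expand : I (ρ (a + b) w) - ρ (J (a + b)) w - ρ (a + b) (I w)
        - I (ρ (J (a + b)) (I w))
        = (I (ρ a w) - ρ (J a) w - ρ a (I w) - I (ρ (J a) (I w)))
        + (I (ρ b w) - ρ (J b) w - ρ b (I w) - I (ρ (J b) (I w))) := by
      simp only [map_add, LinearMap.add_apply]
      abel
    rw [expand, k0, k1, add_zero]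
  have e : ∀ (x : g) (w : v),
      I (ρ (J x) (I w)) = I (ρ x w) - ρ (J x) w - ρ x (I w) := by
    intro x w
    exact (sub_eq_zero.mp (key x w)).symm
  constructor
  · intro p
    ext <;> simp [hJ2, hI2]
  · intro p q
    have h1 := hJint p.1 q.1
    unfold Nij at h1 ⊢
    ext
    · simpa using h1
    · simp only [Prod.snd_sub, Prod.snd_zero, map_sub, e]
      abel
end

section
/- In the setting of a semidirect product g ⊕_ρ v with J an integrable complex structure on g, I ∈ End(v) with I² = -id, and J₊(x,v) = (Jx,Iv): for x ∈ g and v ∈ v, the Nijenhuis tensor of J₊ satisfies N_{J₊}((x,0),(0,v)) = 0 if and only if [I,ρ(x)]v = [I,ρ(Jx)](Iv), where [I,A] = I∘A - A∘I. -/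
/-- For `J₊(x,v) = (Jx, Iv)` on `g ⊕_ρ v`:
`N_{J₊}((x,0),(0,v)) = 0` iff `[I,ρ(x)]v = [I,ρ(Jx)](Iv)`. -/
theorem stmt5 {g v : Type*} [LieRing g] [LieAlgebra ℝ g] [AddCommGroup v] [Module ℝ v]
    (ρ : g →ₗ[ℝ] Module.End ℝ v) (hρ : ∀ x y : g, ρ ⁅x, y⁆ = ⁅ρ x, ρ y⁆)
    (J : g →ₗ[ℝ] g) (hJ2 : ∀ x, J (J x) = -x)
    (hJint : ∀ x y : g, Nij (fun a b => ⁅a, b⁆) J x y = 0)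
    (I : Module.End ℝ v) (hI2 : ∀ w, I (I w) = -w)
    (x : g) (w : v) :
    Nij (fun p q : g × v => (⁅p.1, q.1⁆, ρ p.1 q.2 - ρ q.1 p.2))
        (fun p : g × v => (J p.1, I p.2)) (x, 0) (0, w) = 0 ↔
      I (ρ x w) - ρ x (I w) = I (ρ (J x) (I w)) - ρ (J x) (I (I w)) := by
  simp only [Nij, Prod.mk_sub_mk, Prod.mk_eq_zero, Prod.ext_iff]
  simp [hI2, sub_eq_zero]
  constructor <;> intro h <;> · rw [← sub_eq_zero] at h ⊢; rw [← h]; abel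
end

section
/- In the setting of a semidirect product g ⊕_ρ v with J an integrable complex structure on g, I ∈ End(v) with I² = -id, and J₋(x,v) = (Jx,-Iv): for x ∈ g and v ∈ v, the Nijenhuis tensor of J₋ satisfies N_{J₋}((x,0),(0,v)) = 0 if and only if [I,ρ(x)]v = -[I,ρ(Jx)](Iv). -/
/-- For `J₋(x,v) = (Jx, -Iv)` on `g ⊕_ρ v`:
`N_{J₋}((x,0),(0,v)) = 0` iff `[I,ρ(x)]v = -[I,ρ(Jx)](Iv)`. -/
theorem stmt6 {g v : Type*} [LieRing g] [LieAlgebra ℝ g] [AddCommGroup v] [Module ℝ v]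
    (ρ : g →ₗ[ℝ] Module.End ℝ v) (hρ : ∀ x y : g, ρ ⁅x, y⁆ = ⁅ρ x, ρ y⁆)
    (J : g →ₗ[ℝ] g) (hJ2 : ∀ x, J (J x) = -x)
    (hJint : ∀ x y : g, Nij (fun a b => ⁅a, b⁆) J x y = 0)
    (I : Module.End ℝ v) (hI2 : ∀ w, I (I w) = -w)
    (x : g) (w : v) :
    Nij (fun p q : g × v => (⁅p.1, q.1⁆, ρ p.1 q.2 - ρ q.1 p.2))
        (fun p : g × v => (J p.1, -I p.2)) (x, 0) (0, w) = 0 ↔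
      I (ρ x w) - ρ x (I w) = -(I (ρ (J x) (I w)) - ρ (J x) (I (I w))) := by
  simp only [Nij, Prod.ext_iff, Prod.fst_sub, Prod.snd_sub, map_zero, map_neg, hI2]
  constructor
  · rintro ⟨-, h⟩
    simp only [map_zero, neg_zero, sub_zero, zero_sub, map_neg, hI2, Prod.snd_zero] at h
    linear_combination (norm := abel) -h
  · intro h
    refine ⟨by simp, ?_⟩
    simp only [map_zero, neg_zero, sub_zero, zero_sub, map_neg, hI2, Prod.snd_zero]
    linear_combination (norm := abel) -h
end

section
/- Let g be a real Lie algebra with an integrable complex structure J, and form the tangent algebra T_ad g = g ⊕_ad g (the semidirect product of g with itself under the adjoint representation, second factor abelian). Then J₊(x,v) = (Jx, Jv) is an integrable complex structure on T_ad g. -/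
/-- If `J` is an integrable complex structure on `g`, then `J₊(x,v) = (Jx, Jv)` is an
integrable complex structure on the tangent algebra `T_ad g = g ⊕_ad g`,
whose bracket is `[(x,u),(y,w)] = ([x,y], [x,w] - [y,u])`. -/
theorem stmt7 {g : Type*} [LieRing g] [LieAlgebra ℝ g]
    (J : g →ₗ[ℝ] g) (hJ2 : ∀ x, J (J x) = -x)
    (hJint : ∀ x y : g, Nij (fun a b => ⁅a, b⁆) J x y = 0) :
    (∀ p : g × g, ((J (J p.1), J (J p.2)) : g × g) = -p) ∧
    ∀ p q : g × g,
      Nij (fun p q : g × g => (⁅p.1, q.1⁆, ⁅p.1, q.2⁆ - ⁅q.1, p.2⁆))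
        (fun p : g × g => (J p.1, J p.2)) p q = 0 := by
  constructor
  · intro p; ext <;> simp [hJ2]
  · intro p q
    have h1 := hJint p.1 q.1
    have h2 := hJint p.1 q.2
    have h3 := hJint q.1 p.2
    simp only [Nij] at h1 h2 h3 ⊢
    ext
    · simpa using h1
    · simp only [Prod.snd_sub, Prod.mk.injEq, map_sub]
      have : J ⁅p.1, q.2⁆ - J ⁅q.1, p.2⁆ - (⁅J p.1, q.2⁆ - ⁅q.1, J p.2⁆) -
          (⁅p.1, J q.2⁆ - ⁅J q.1, p.2⁆) - (J ⁅J p.1, J q.2⁆ - J ⁅J q.1, J p.2⁆) =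
          (J ⁅p.1, q.2⁆ - ⁅J p.1, q.2⁆ - ⁅p.1, J q.2⁆ - J ⁅J p.1, J q.2⁆) -
          (J ⁅q.1, p.2⁆ - ⁅J q.1, p.2⁆ - ⁅q.1, J p.2⁆ - J ⁅J q.1, J p.2⁆) := by abel
      simp [this, h2, h3]
end

section
/- Let g be a real Lie algebra with an integrable complex structure J. Define J* on the dual g* by (J*α)(x) = -α(Jx), and form the cotangent algebra g ⊕_{ad*} g* under the coadjoint representation. Then J₊(x,α) = (Jx, J*α) is an integrable complex structure on g ⊕_{ad*} g*. -/
/-- If `J` is an integrable complex structure on `g`, then `J₊(x,α) = (Jx, J*α)` with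
`(J*α)(x) = -α(Jx)` is an integrable complex structure on the cotangent algebra
`g ⊕_{ad*} g*`, whose bracket is `[(x,α),(y,β)] = ([x,y], ad*(x)β - ad*(y)α)` with
`(ad*(x)α)(y) = -α([x,y])`. -/
theorem stmt8 {g : Type*} [LieRing g] [LieAlgebra ℝ g]
    (J : g →ₗ[ℝ] g) (hJ2 : ∀ x, J (J x) = -x)
    (hJint : ∀ x y : g, Nij (fun a b => ⁅a, b⁆) J x y = 0) :
    (∀ p : g × Module.Dual ℝ g,
      ((J (J p.1), -(-(p.2.comp J)).comp J) : g × Module.Dual ℝ g) = -p) ∧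
    ∀ p q : g × Module.Dual ℝ g,
      Nij
        (fun p q : g × Module.Dual ℝ g =>
          (⁅p.1, q.1⁆,
            -(q.2.comp ((LieAlgebra.ad ℝ g) p.1)) - -(p.2.comp ((LieAlgebra.ad ℝ g) q.1))))
        (fun p : g × Module.Dual ℝ g => (J p.1, -(p.2.comp J))) p q = 0 := by
  constructor
  · rintro ⟨x, α⟩
    refine Prod.ext (hJ2 x) ?_
    ext z
    simp [hJ2 z]
  · rintro ⟨x, α⟩ ⟨y, β⟩
    simp only [Nij, Prod.mk_sub_mk, Prod.ext_iff, Prod.fst_sub, Prod.snd_sub]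
    constructor
    · have := hJint x y
      simpa [Nij] using this
    · ext z
      have hx := congrArg β (hJint x z)
      have hy := congrArg α (hJint y z)
      simp only [Nij, map_sub, map_zero] at hx hy
      simp only [LinearMap.sub_apply, LinearMap.neg_apply, LinearMap.comp_apply,
        LieAlgebra.ad_apply, LinearMap.zero_apply, Prod.snd_zero]
      linarith
end

section
/- The Lie algebra aff(ℝ^{2n}) = gl(2n,ℝ) ⋉ ℝ^{2n} of affine motions of ℝ^{2n} admits an integrable complex structure, given by J₊(A, v) = (-A∘I, Iv) where I ∈ End(ℝ^{2n}) satisfies I² = -id. -/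
/-- The Lie algebra `aff(ℝ^{2n}) = gl(2n,ℝ) ⋉ ℝ^{2n}` with bracket
`[(A,u),(B,w)] = (AB - BA, Aw - Bu)` admits the integrable complex structure
`J₊(A,v) = (-A∘I, Iv)`, for any `I` with `I² = -id`. -/
theorem stmt10 {n : ℕ} (I : Matrix (Fin (2 * n)) (Fin (2 * n)) ℝ) (hI : I * I = -1) :
    (∀ p : Matrix (Fin (2 * n)) (Fin (2 * n)) ℝ × (Fin (2 * n) → ℝ),
      ((-(-(p.1 * I) * I), I.mulVec (I.mulVec p.2)) :
        Matrix (Fin (2 * n)) (Fin (2 * n)) ℝ × (Fin (2 * n) → ℝ)) = -p) ∧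
    ∀ p q : Matrix (Fin (2 * n)) (Fin (2 * n)) ℝ × (Fin (2 * n) → ℝ),
      Nij
        (fun p q : Matrix (Fin (2 * n)) (Fin (2 * n)) ℝ × (Fin (2 * n) → ℝ) =>
          (p.1 * q.1 - q.1 * p.1, p.1.mulVec q.2 - q.1.mulVec p.2))
        (fun p : Matrix (Fin (2 * n)) (Fin (2 * n)) ℝ × (Fin (2 * n) → ℝ) =>
          (-(p.1 * I), I.mulVec p.2)) p q = 0 := by
  constructor
  · intro p
    have h1 : -(-(p.1 * I) * I) = -p.1 := by
      rw [neg_mul, neg_neg, mul_assoc, hI, mul_neg_one]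
    have h2 : I.mulVec (I.mulVec p.2) = -p.2 := by
      rw [Matrix.mulVec_mulVec, hI, Matrix.neg_mulVec, Matrix.one_mulVec]
    exact Prod.ext (by simpa using h1) (by simpa using h2)
  · intro p q
    obtain ⟨A, u⟩ := p
    obtain ⟨B, w⟩ := q
    simp only [Nij, Prod.mk_sub_mk]
    refine Prod.ext ?_ ?_
    · show -((A * B - B * A) * I) - (-(A * I) * B - B * -(A * I)) -
        (A * -(B * I) - -(B * I) * A) - -((-(A * I) * -(B * I) - -(B * I) * -(A * I)) * I) = 0
      have : (A * I) * (B * I) * I = -(A * I * B) := by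
        rw [mul_assoc (A*I), mul_assoc B, hI, mul_neg_one, mul_neg]
      have h2 : (B * I) * (A * I) * I = -(B * I * A) := by
        rw [mul_assoc (B*I), mul_assoc A, hI, mul_neg_one, mul_neg]
      simp only [sub_mul, add_mul, mul_sub, mul_add, neg_mul, mul_neg, neg_neg, mul_assoc, hI, mul_neg_one, mul_one, sub_eq_add_neg]
      abel
    · show I.mulVec (A.mulVec w - B.mulVec u) -
        ((-(A * I)).mulVec w - B.mulVec (I.mulVec u)) -
        (A.mulVec (I.mulVec w) - (-(B * I)).mulVec u) -
        I.mulVec ((-(A * I)).mulVec (I.mulVec w) - (-(B * I)).mulVec (I.mulVec u)) = 0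
      simp only [Matrix.mulVec_sub, Matrix.neg_mulVec, Matrix.mulVec_neg,
        Matrix.mulVec_mulVec, neg_mul, mul_neg, neg_neg, mul_assoc, hI, mul_neg_one, mul_one]
      abel
end

section
/- Let g be a real Lie algebra with a flat connection ∇ : g → gl(g) (i.e., ∇ is a Lie algebra homomorphism), and let T_∇ g = g ⊕_∇ g be the tangent algebra. Then the endomorphism K(x,y) = (y,-x) is an integrable complex structure on T_∇ g if and only if ∇ is torsion-free, i.e., ∇_x y - ∇_y x = [x,y] for all x,y ∈ g. -/
/-- For a flat connection `∇` on `g`, the endomorphism `K(x,y) = (y,-x)` of the tangent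
algebra `T_∇ g = g ⊕_∇ g` (bracket `[(x,u),(y,w)] = ([x,y], ∇ₓw - ∇_y u)`) is an
integrable complex structure iff `∇` is torsion-free. -/
theorem stmt11 {g : Type*} [LieRing g] [LieAlgebra ℝ g]
    (D : g →ₗ[ℝ] Module.End ℝ g) (hflat : ∀ x y : g, D ⁅x, y⁆ = ⁅D x, D y⁆) :
    (∀ p q : g × g,
        Nij (fun p q : g × g => (⁅p.1, q.1⁆, D p.1 q.2 - D q.1 p.2))
          (fun p : g × g => (p.2, -p.1)) p q = 0) ↔
      ∀ x y : g, D x y - D y x = ⁅x, y⁆ := by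
  constructor
  · intro h x y
    have H := congrArg Prod.snd (h (x, 0) (y, 0))
    simp [Nij] at H
    linear_combination (norm := abel) H + lie_skew y x
  · intro h p q
    obtain ⟨x, u⟩ := p
    obtain ⟨y, w⟩ := q
    have h1 := h x w
    have h2 := h u y
    have h3 := h x y
    have h4 := h w u
    simp [Nij, Prod.ext_iff]
    constructor
    · linear_combination (norm := abel) h1 + h2
    · linear_combination (norm := abel) h3 + h4 - lie_skew x y
end

section
/- Let u be a real Lie algebra with an integrable complex structure K such that u = g ⊕ K(g) where g is a subalgebra of u and K(g) is an ideal of u. Then K(g) is an abelian ideal. -/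
/-- If `u = g ⊕ K(g)` with `K` an integrable complex structure, `g` a subalgebra and
`K(g)` an ideal, then `K(g)` is an abelian ideal. -/
theorem stmt12 {u : Type*} [LieRing u] [LieAlgebra ℝ u]
    (K : u →ₗ[ℝ] u) (hK2 : ∀ x, K (K x) = -x)
    (hKint : ∀ x y : u, Nij (fun a b => ⁅a, b⁆) K x y = 0)
    (g : LieSubalgebra ℝ u)
    (hideal : ∀ x : u, ∀ y ∈ (g.toSubmodule).map K, ⁅x, y⁆ ∈ (g.toSubmodule).map K)
    (hcompl : IsCompl g.toSubmodule ((g.toSubmodule).map K)) :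
    ∀ a ∈ (g.toSubmodule).map K, ∀ b ∈ (g.toSubmodule).map K, ⁅a, b⁆ = (0 : u) := by
  rintro a ⟨x, hx, rfl⟩ b ⟨y, hy, rfl⟩
  have hd := hcompl.disjoint
  rw [Submodule.disjoint_def] at hd
  have hnij := hKint x y
  simp only [Nij] at hnij
  have heq : K ⁅K x, K y⁆ = K ⁅x, y⁆ - ⁅K x, y⁆ - ⁅x, K y⁆ :=
    (sub_eq_zero.mp hnij).symm
  have h1 : K ⁅K x, K y⁆ ∈ g.toSubmodule := by
    obtain ⟨w, hw, hw'⟩ := hideal (K x) (K y) ⟨y, hy, rfl⟩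
    rw [← hw', hK2]
    exact g.toSubmodule.neg_mem hw
  have h2 : K ⁅K x, K y⁆ ∈ (g.toSubmodule).map K := by
    rw [heq]
    refine Submodule.sub_mem _ (Submodule.sub_mem _ ?_ ?_) ?_
    · exact ⟨⁅x, y⁆, g.lie_mem hx hy, rfl⟩
    · have : ⁅K x, y⁆ = -⁅y, K x⁆ := (lie_skew _ _).symm
      rw [this]
      exact Submodule.neg_mem _ (hideal y (K x) ⟨x, hx, rfl⟩)
    · exact hideal x (K y) ⟨y, hy, rfl⟩
  have h0 : K ⁅K x, K y⁆ = 0 := hd _ h1 h2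
  have h3 := congrArg K h0
  rw [hK2, map_zero] at h3
  exact neg_eq_zero.mp h3
end

section
/- Let u be a real Lie algebra with an integrable complex structure K such that u = g ⊕ K(g) where g is a subalgebra and K(g) is an ideal of u. Then the map ∇ : g → gl(g), ∇_x = -K ∘ ad(x) ∘ K (restricted to g via the decomposition), is a flat torsion-free connection on g, i.e., ∇_{[x,y]} = [∇_x, ∇_y] and ∇_x y - ∇_y x = [x,y], and u is isomorphic as a Lie algebra to the tangent algebra T_∇ g = g ⊕_∇ g via (x, Ky) ↦ (x, y). -/
/-- If `u = g ⊕ K(g)` with `K` an integrable complex structure, `g` a subalgebra and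
`K(g)` an ideal, then `∇ₓ = -K ∘ ad(x) ∘ K` is a flat torsion-free connection on `g` and
`u` is isomorphic to the tangent algebra `T_∇ g` via `(x,y) ↦ x + K y`. -/
theorem stmt13 {u : Type*} [LieRing u] [LieAlgebra ℝ u]
    (K : u →ₗ[ℝ] u) (hK2 : ∀ x, K (K x) = -x)
    (hKint : ∀ x y : u, Nij (fun a b => ⁅a, b⁆) K x y = 0)
    (g : LieSubalgebra ℝ u)
    (hideal : ∀ x : u, ∀ y ∈ (g.toSubmodule).map K, ⁅x, y⁆ ∈ (g.toSubmodule).map K)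
    (hcompl : IsCompl g.toSubmodule ((g.toSubmodule).map K)) :
    ∃ D : g → g → g,
      (∀ x y : g, ((D x y : u)) = -K ⁅(x : u), K (y : u)⁆) ∧
      (∀ x y z : g, D ⁅x, y⁆ z = D x (D y z) - D y (D x z)) ∧
      (∀ x y : g, D x y - D y x = ⁅x, y⁆) ∧
      Function.Bijective (fun p : g × g => ((p.1 : u) + K (p.2 : u))) ∧
      (∀ p q : g × g,
        ((⁅p.1, q.1⁆ : g) : u) + K ((D p.1 q.2 - D q.1 p.2 : g) : u) =
          ⁅(p.1 : u) + K (p.2 : u), (q.1 : u) + K (q.2 : u)⁆) := by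
  classical
  have hKg : ∀ y : u, y ∈ g → K y ∈ (g.toSubmodule).map K := fun y hy => ⟨y, hy, rfl⟩
  -- K ⁅x, K y⁆ ∈ g for y ∈ g
  have hA : ∀ (x : u) (y : u), y ∈ g → K ⁅x, K y⁆ ∈ g := by
    intro x y hy
    obtain ⟨z, hz, hzK⟩ := hideal x _ (hKg y hy)
    have h : K ⁅x, K y⁆ = -z := by rw [← hzK, hK2]
    rw [h]; exact neg_mem hz
  have hmem : ∀ x y : g, -K ⁅(x : u), K (y : u)⁆ ∈ g := fun x y =>
    neg_mem (hA x y y.2)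
  set D : g → g → g := fun x y => ⟨-K ⁅(x : u), K (y : u)⁆, hmem x y⟩ with hDdef
  have hDval : ∀ x y : g, ((D x y : u)) = -K ⁅(x : u), K (y : u)⁆ := fun x y => rfl
  have hKD : ∀ x y : g, K ((D x y : u)) = ⁅(x : u), K (y : u)⁆ := by
    intro x y
    rw [hDval, map_neg, hK2, neg_neg]
  have hdisj := hcompl.disjoint
  -- K(g) is abelian
  have hab : ∀ x y : g, ⁅K (x : u), K (y : u)⁆ = 0 := by
    intro x y
    have hnij := hKint (x : u) (y : u)
    unfold Nij at hnij
    simp only at hnij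
    have hw : K ⁅(x:u), (y:u)⁆ - ⁅K (x:u), (y:u)⁆ - ⁅(x:u), K (y:u)⁆
        = K ⁅K (x:u), K (y:u)⁆ := sub_eq_zero.mp hnij
    have hwe : ⁅K (x:u), K (y:u)⁆
        = ⁅(x:u), (y:u)⁆ + K ⁅K (x:u), (y:u)⁆ + K ⁅(x:u), K (y:u)⁆ := by
      have := congrArg K hw
      rw [hK2] at this
      rw [map_sub, map_sub] at this
      rw [hK2] at this
      have h2 : ⁅K (x:u), K (y:u)⁆ = -(-⁅(x:u),(y:u)⁆ - K ⁅K (x:u), (y:u)⁆ -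
          K ⁅(x:u), K (y:u)⁆) := by rw [this, neg_neg]
      rw [h2]; abel
    have hwg : ⁅K (x:u), K (y:u)⁆ ∈ g.toSubmodule := by
      rw [hwe]
      refine add_mem (add_mem (g.lie_mem x.2 y.2) ?_) (hA _ _ y.2)
      have h3 : ⁅K (x:u), (y:u)⁆ = -⁅(y:u), K (x:u)⁆ := by rw [lie_skew]
      rw [h3, map_neg]
      exact neg_mem (hA _ _ x.2)
    have hwK : ⁅K (x:u), K (y:u)⁆ ∈ (g.toSubmodule).map K :=
      hideal _ _ (hKg _ y.2)
    exact (Submodule.disjoint_def.mp hdisj) _ hwg hwK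
  refine ⟨D, hDval, ?_, ?_, ?_, ?_⟩
  · -- flatness: pure Jacobi
    intro x y z
    apply Subtype.ext
    have : ((D ⁅x, y⁆ z : u)) = ((D x (D y z) : u)) - ((D y (D x z) : u)) := by
      rw [hDval ⁅x, y⁆ z, hDval x (D y z), hDval y (D x z), hKD y z, hKD x z]
      rw [LieSubalgebra.coe_bracket, lie_lie, map_sub]
      abel
    simpa using this
  · -- torsion-free
    intro x y
    apply Subtype.ext
    have hnij := hKint (x : u) (y : u)
    unfold Nij at hnij
    simp only at hnij
    rw [hab x y, map_zero, sub_zero] at hnij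
    have h1 : K ⁅(x:u), (y:u)⁆ = ⁅K (x:u), (y:u)⁆ + ⁅(x:u), K (y:u)⁆ := by
      have := sub_eq_zero.mp hnij; rw [sub_eq_iff_eq_add] at this
      rw [this]; abel
    have h2 := congrArg K h1
    rw [hK2, map_add] at h2
    have h3 : ((D x y : u)) - ((D y x : u)) = ⁅(x:u), (y:u)⁆ := by
      rw [hDval, hDval]
      have h4 : ⁅(y:u), K (x:u)⁆ = -⁅K (x:u), (y:u)⁆ := (lie_skew _ _).symm
      rw [h4, map_neg]
      have : -⁅(x:u),(y:u)⁆ = K ⁅K (x:u), (y:u)⁆ + K ⁅(x:u), K (y:u)⁆ := h2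
      have h5 : K ⁅(x:u), K (y:u)⁆ = -⁅(x:u),(y:u)⁆ - K ⁅K (x:u), (y:u)⁆ := by
        rw [this]; abel
      rw [h5]; abel
    simpa using h3
  · -- bijective
    constructor
    · rintro ⟨p1, p2⟩ ⟨q1, q2⟩ h
      simp only at h
      have hg1 : ((p1 : u) - q1) ∈ g.toSubmodule := sub_mem p1.2 q1.2
      have heq : (p1 : u) - q1 = K ((q2 : u) - p2) := by
        rw [map_sub, sub_eq_sub_iff_add_eq_add]
        exact h.trans (add_comm _ _)
      have hg2 : ((p1 : u) - q1) ∈ (g.toSubmodule).map K := by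
        rw [heq]; exact ⟨_, sub_mem q2.2 p2.2, rfl⟩
      have hz : (p1 : u) - q1 = 0 := (Submodule.disjoint_def.mp hdisj) _ hg1 hg2
      have hz2 : K ((q2 : u) - p2) = 0 := by rw [← heq, hz]
      have hz3 : (q2 : u) - p2 = 0 := by
        have := congrArg K hz2
        rw [hK2, map_zero, neg_eq_zero] at this; exact this
      have e1 : p1 = q1 := Subtype.ext (sub_eq_zero.mp hz)
      have e2 : p2 = q2 := Subtype.ext (sub_eq_zero.mp hz3).symm
      rw [e1, e2]
    · intro z
      have hz : z ∈ g.toSubmodule ⊔ (g.toSubmodule).map K := by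
        rw [hcompl.sup_eq_top]; trivial
      obtain ⟨a, ha, b, hb, hab'⟩ := Submodule.mem_sup.mp hz
      obtain ⟨c, hc, hcb⟩ := hb
      exact ⟨(⟨a, ha⟩, ⟨c, hc⟩), by simp [hcb, hab']⟩
  · -- bracket compatibility
    intro p q
    have hsub : ((D p.1 q.2 - D q.1 p.2 : g) : u) = ((D p.1 q.2 : u)) - ((D q.1 p.2 : u)) := rfl
    rw [hsub, map_sub, hKD, hKD, LieSubalgebra.coe_bracket]
    rw [lie_add, add_lie, add_lie, hab p.2 q.2]
    have h4 : ⁅K (p.2 : u), (q.1 : u)⁆ = -⁅(q.1 : u), K (p.2 : u)⁆ := (lie_skew _ _).symm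
    rw [h4]
    abel
end

section
/- Let g be a real Lie algebra with a flat torsion-free connection ∇ and an integrable complex structure J with ∇J = 0 (i.e., ∇_x ∘ J = J ∘ ∇_x for all x). Then the endomorphisms J₋(x,y) = (Jx,-Jy) and K(x,y) = (y,-x) form a hypercomplex structure on the tangent algebra T_∇ g: both are integrable complex structures and J₋ ∘ K = -K ∘ J₋. -/
/-- If `∇` is a flat torsion-free connection on `g` and `J` a `∇`-parallel integrable
complex structure, then `J₋(x,y) = (Jx,-Jy)` and `K(x,y) = (y,-x)` form a hypercomplex
structure on the tangent algebra `T_∇ g`. -/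
theorem stmt15 {g : Type*} [LieRing g] [LieAlgebra ℝ g]
    (D : g →ₗ[ℝ] Module.End ℝ g) (hflat : ∀ x y : g, D ⁅x, y⁆ = ⁅D x, D y⁆)
    (htf : ∀ x y : g, D x y - D y x = ⁅x, y⁆)
    (J : g →ₗ[ℝ] g) (hJ2 : ∀ x, J (J x) = -x)
    (hJint : ∀ x y : g, Nij (fun a b => ⁅a, b⁆) J x y = 0)
    (hpar : ∀ x y : g, D x (J y) = J (D x y)) :
    (∀ p : g × g, ((J (J p.1), -J (-J p.2)) : g × g) = -p) ∧
    (∀ p q : g × g,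
      Nij (fun p q : g × g => (⁅p.1, q.1⁆, D p.1 q.2 - D q.1 p.2))
        (fun p : g × g => (J p.1, -J p.2)) p q = 0) ∧
    (∀ p : g × g, ((-p.1, -p.2) : g × g) = -p) ∧
    (∀ p q : g × g,
      Nij (fun p q : g × g => (⁅p.1, q.1⁆, D p.1 q.2 - D q.1 p.2))
        (fun p : g × g => (p.2, -p.1)) p q = 0) ∧
    (∀ p : g × g,
      ((J p.2, -J (-p.1)) : g × g) = -((-J p.2 : g), -(J p.1 : g))) := by
  refine ⟨?_, ?_, ?_, ?_, ?_⟩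
  · intro p; simp [hJ2, Prod.ext_iff]
  · intro p q
    obtain ⟨x, u⟩ := p; obtain ⟨y, w⟩ := q
    have h1 := hJint x y
    simp only [Nij] at h1 ⊢
    simp only [map_neg, map_sub, hpar, hJ2, Prod.mk_sub_mk, Prod.mk_eq_zero]
    constructor
    · rw [← h1]
    · abel
  · intro p; rfl
  · intro p q
    obtain ⟨x, u⟩ := p; obtain ⟨y, w⟩ := q
    simp only [Nij, map_neg, map_sub, Prod.mk_sub_mk, Prod.mk_eq_zero]
    constructor
    · rw [← htf x w, ← htf u y]; abel
    · rw [← htf x y, ← htf u w]; abel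
  · intro p; simp [hJ2, Prod.ext_iff]
end

section
/- Let ∇ be a flat connection on a real Lie algebra g and ∇* the contragredient representation on g*, (∇*_x α)(y) = -α(∇_x y). Then the 2-form Ω on the cotangent algebra T*_∇ g = g ⊕_{∇*} g* defined by Ω((x,α),(y,β)) = α(y) - β(x) is closed (dΩ = 0) if and only if ∇ is torsion-free. -/
/-- For a flat connection `∇` on `g` and the contragredient representation
`∇*ₓα = -α ∘ ∇ₓ`, the 2-form `Ω((x,α),(y,β)) = α(y) - β(x)` on the cotangent algebra
`T*_∇ g = g ⊕_{∇*} g*` is closed iff `∇` is torsion-free. -/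
theorem stmt16 {g : Type*} [LieRing g] [LieAlgebra ℝ g]
    (D : g →ₗ[ℝ] Module.End ℝ g) (hflat : ∀ x y : g, D ⁅x, y⁆ = ⁅D x, D y⁆) :
    (∀ a b c : g × Module.Dual ℝ g,
      (fun p q : g × Module.Dual ℝ g => p.2 q.1 - q.2 p.1) a
          ((fun p q : g × Module.Dual ℝ g =>
            ((⁅p.1, q.1⁆ : g), -(q.2.comp (D p.1)) - -(p.2.comp (D q.1)))) b c) +
        (fun p q : g × Module.Dual ℝ g => p.2 q.1 - q.2 p.1) b
          ((fun p q : g × Module.Dual ℝ g =>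
            ((⁅p.1, q.1⁆ : g), -(q.2.comp (D p.1)) - -(p.2.comp (D q.1)))) c a) +
        (fun p q : g × Module.Dual ℝ g => p.2 q.1 - q.2 p.1) c
          ((fun p q : g × Module.Dual ℝ g =>
            ((⁅p.1, q.1⁆ : g), -(q.2.comp (D p.1)) - -(p.2.comp (D q.1)))) a b) = 0) ↔
      ∀ x y : g, D x y - D y x = ⁅x, y⁆ := by
  constructor
  · intro h x y
    have key : ∀ φ : Module.Dual ℝ g, φ (D x y - D y x - ⁅x, y⁆) = 0 := by
      intro φ
      have := h (0, φ) (x, 0) (y, 0)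
      simp only [LinearMap.sub_apply, LinearMap.neg_apply, LinearMap.comp_apply,
        LinearMap.zero_apply, map_sub, map_neg, map_zero] at this
      simp only [map_sub]
      linarith [this]
    have := (Module.forall_dual_apply_eq_zero_iff ℝ (D x y - D y x - ⁅x, y⁆)).mp key
    exact sub_eq_zero.mp this
  · intro h a b c
    simp only [LinearMap.sub_apply, LinearMap.neg_apply, LinearMap.comp_apply]
    have h1 := h b.1 c.1
    have h2 := h c.1 a.1
    have h3 := h a.1 b.1
    have e1 : a.2 ⁅b.1, c.1⁆ = a.2 (D b.1 c.1) - a.2 (D c.1 b.1) := by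
      rw [← h1, map_sub]
    have e2 : b.2 ⁅c.1, a.1⁆ = b.2 (D c.1 a.1) - b.2 (D a.1 c.1) := by
      rw [← h2, map_sub]
    have e3 : c.2 ⁅a.1, b.1⁆ = c.2 (D a.1 b.1) - c.2 (D b.1 a.1) := by
      rw [← h3, map_sub]
    rw [e1, e2, e3]; ring
end

section
/- Let ∇ be a flat torsion-free connection on a real Lie algebra g and ψ : g → g* a linear isomorphism which is a g-module isomorphism from (g,∇) to (g*,∇*), i.e., ψ(∇_x y) = ∇*_x ψ(y) for all x,y. Then the 2-form ω on T_∇ g = g ⊕_∇ g defined by ω((x,y),(x',y')) = ψ(y)(x') - ψ(y')(x) is a symplectic structure: it is non-degenerate and closed with respect to the bracket of T_∇ g. -/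
/-- If `∇` is a flat torsion-free connection on `g` and `ψ : (g,∇) → (g*,∇*)` a
`g`-module isomorphism (`ψ(∇ₓy) = ∇*ₓψ(y) = -ψ(y)∘∇ₓ`), then
`ω((x,y),(x',y')) = ψ(y)(x') - ψ(y')(x)` is a symplectic structure
(non-degenerate and closed) on the tangent algebra `T_∇ g`, whose bracket is
`[(x,u),(y,w)] = ([x,y], ∇ₓw - ∇_y u)`. -/
theorem stmt17 {g : Type*} [LieRing g] [LieAlgebra ℝ g]
    (D : g →ₗ[ℝ] Module.End ℝ g) (hflat : ∀ x y : g, D ⁅x, y⁆ = ⁅D x, D y⁆)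
    (htf : ∀ x y : g, D x y - D y x = ⁅x, y⁆)
    (ψ : g →ₗ[ℝ] Module.Dual ℝ g) (hbij : Function.Bijective ψ)
    (hmod : ∀ x y : g, ψ (D x y) = -(ψ y).comp (D x)) :
    -- ω is non-degenerate:
    (∀ p : g × g, (∀ q : g × g, ψ p.2 q.1 - ψ q.2 p.1 = 0) → p = 0) ∧
    -- ω is closed:
    (∀ a b c : g × g,
      (ψ a.2 ⁅b.1, c.1⁆ - ψ (D b.1 c.2 - D c.1 b.2) a.1) +
        (ψ b.2 ⁅c.1, a.1⁆ - ψ (D c.1 a.2 - D a.1 c.2) b.1) +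
        (ψ c.2 ⁅a.1, b.1⁆ - ψ (D a.1 b.2 - D b.1 a.2) c.1) = 0) := by
  constructor
  · intro p hp
    have h2 : p.2 = 0 := by
      apply hbij.1
      rw [map_zero]
      ext q1
      have := hp (q1, 0)
      simpa using this
    have h1 : p.1 = 0 := by
      rw [← Module.forall_dual_apply_eq_zero_iff ℝ]
      intro φ
      obtain ⟨q2, hq⟩ := hbij.2 φ
      have := hp (0, q2)
      simp only [map_zero, LinearMap.zero_apply, zero_sub, neg_eq_zero] at this
      rwa [← hq]
    exact Prod.ext h1 h2
  · intro a b c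
    simp only [← htf, map_sub, hmod, LinearMap.sub_apply, LinearMap.add_apply, LinearMap.neg_apply,
      LinearMap.comp_apply, neg_sub, sub_neg_eq_add]
    ring
end

section
/- On the Lie algebra aff(ℂⁿ) = gl(n,ℂ) ⊕ ℂⁿ (viewed as a real Lie algebra) with the flat torsion-free connection ∇_{(x,v)}(y,u) = (xy, xu), the complex structure J₊(x,v) = (-x·i, iv) (where · denotes right multiplication by i ∈ ℂ acting on gl(n,ℂ) and on ℂⁿ) is parallel: ∇_{(x,v)} ∘ J₊ = J₊ ∘ ∇_{(x,v)} for all (x,v) ∈ aff(ℂⁿ). Consequently the tangent algebra T_∇ aff(ℂⁿ) carries a hypercomplex structure. -/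
noncomputable section

/-- The real Lie algebra `aff(ℂⁿ) = gl(n,ℂ) ⊕ ℂⁿ`. -/
abbrev AffC (n : ℕ) := Matrix (Fin n) (Fin n) ℂ × (Fin n → ℂ)

/-- The flat torsion-free connection `∇_{(x,v)}(y,u) = (xy, xu)` on `aff(ℂⁿ)`. -/
def nablaC {n : ℕ} (p q : AffC n) : AffC n := (p.1 * q.1, p.1.mulVec q.2)

/-- The bracket of `aff(ℂⁿ)`: `[(x,v),(y,u)] = (xy - yx, xu - yv)`. -/
def brAffC {n : ℕ} (p q : AffC n) : AffC n :=
  (p.1 * q.1 - q.1 * p.1, p.1.mulVec q.2 - q.1.mulVec p.2)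

/-- The complex structure `J₊(x,v) = (-x·i, iv)` on `aff(ℂⁿ)` (right multiplication
by `i`). -/
def JpC {n : ℕ} (p : AffC n) : AffC n := (-(Complex.I • p.1), Complex.I • p.2)

/-- The bracket of the tangent algebra `T_∇ aff(ℂⁿ)`:
`[(a,b),(c,d)] = ([a,c], ∇ₐd - ∇_c b)`. -/
def TbrC {n : ℕ} (a b : AffC n × AffC n) : AffC n × AffC n :=
  (brAffC a.1 b.1, nablaC a.1 b.2 - nablaC b.1 a.2)

/-- `J₋(a,b) = (J₊a, -J₊b)` on `T_∇ aff(ℂⁿ)`. -/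
def JmC {n : ℕ} (a : AffC n × AffC n) : AffC n × AffC n := (JpC a.1, -JpC a.2)

/-- `K(a,b) = (b,-a)` on `T_∇ aff(ℂⁿ)`. -/
def KC {n : ℕ} (a : AffC n × AffC n) : AffC n × AffC n := (a.2, -a.1)

/-- `J₊` is parallel for the flat torsion-free connection `∇` on `aff(ℂⁿ)`;
consequently `T_∇ aff(ℂⁿ)` carries a hypercomplex structure, given by the pair
of anticommuting integrable complex structures `J₋` and `K`. -/
theorem stmt19 {n : ℕ} :
    -- ∇ J₊ = 0:
    (∀ p q : AffC n, nablaC p (JpC q) = JpC (nablaC p q)) ∧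
    -- J₋ is an integrable complex structure on T_∇ aff(ℂⁿ):
    (∀ a : AffC n × AffC n, JmC (JmC a) = -a) ∧
    (∀ a b : AffC n × AffC n, Nij TbrC JmC a b = 0) ∧
    -- K is an integrable complex structure on T_∇ aff(ℂⁿ):
    (∀ a : AffC n × AffC n, KC (KC a) = -a) ∧
    (∀ a b : AffC n × AffC n, Nij TbrC KC a b = 0) ∧
    -- J₋ and K anticommute:
    (∀ a : AffC n × AffC n, JmC (KC a) = -KC (JmC a)) := by
  have key : ∀ a b : AffC n × AffC n,
      ∀ J : (AffC n × AffC n) → (AffC n × AffC n), Nij TbrC J a b =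
      J (TbrC a b) - TbrC (J a) b - TbrC a (J b) - J (TbrC (J a) (J b)) := fun _ _ _ => rfl
  refine ⟨fun p q => ?_, fun a => ?_, fun a b => ?_, fun a => ?_, fun a b => ?_, fun a => ?_⟩
  · simp [nablaC, JpC, Matrix.mulVec_smul, mul_smul_comm]
  · simp [JmC, JpC, Prod.ext_iff, smul_smul, Complex.I_mul_I, neg_smul]
  · obtain ⟨⟨x,v⟩,⟨y,u⟩⟩ := a
    obtain ⟨⟨z,w⟩,⟨s,t⟩⟩ := b
    simp only [Nij, TbrC, brAffC, nablaC, JmC, JpC, Prod.ext_iff, Prod.fst, Prod.snd,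
      Prod.neg_mk, Prod.mk_sub_mk, Prod.mk_add_mk, Matrix.mulVec_smul,
      Matrix.smul_mulVec, Prod.fst_zero, Prod.snd_zero,
      Matrix.mulVec_neg, Matrix.neg_mulVec, Matrix.mulVec_sub, Matrix.sub_mulVec,
      mul_smul_comm, smul_mul_assoc, smul_smul, Complex.I_mul_I,
      mul_sub, sub_mul, mul_neg, neg_mul, smul_sub, smul_neg, neg_smul, one_smul, neg_neg,
      Prod.mk_eq_zero]
    and_intros <;> module
  · simp [KC, Prod.ext_iff]
  · obtain ⟨⟨x,v⟩,⟨y,u⟩⟩ := a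
    obtain ⟨⟨z,w⟩,⟨s,t⟩⟩ := b
    simp only [Nij, TbrC, brAffC, nablaC, KC, Prod.ext_iff, Prod.fst, Prod.snd,
      Prod.neg_mk, Prod.mk_sub_mk, Prod.mk_add_mk, Matrix.mulVec_smul,
      Matrix.smul_mulVec, Prod.fst_zero, Prod.snd_zero,
      Matrix.mulVec_neg, Matrix.neg_mulVec, Matrix.mulVec_sub, Matrix.sub_mulVec,
      mul_sub, sub_mul, mul_neg, neg_mul, neg_neg, Prod.mk_eq_zero]
    and_intros <;> abel
  · simp [JmC, KC, JpC, Prod.ext_iff]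

end
end
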